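/- arXiv:1702.04621 — 2 statements merged into one kernel-verified Lean document; each statement's English description precedes it below -/
import Mathlib

section
/- For the family of implicit methods pairing with the Shu–Osher SSPRK(3,3) method, defined by Ã = [[0,0,0],[4γ+2β, 1−4γ−2β, 0],[1/2−β−γ, γ, β]] and b̃ = (1/6, 1/6, 2/3) with γ = (2β² − (3/2)β + 1/3)/(2 − 4β) for β ≠ 1/2, the method satisfies the third-order conditions b̃ᵀẽ = 1, b̃ᵀc̃ = 1/2, b̃ᵀc̃² = 1/3, and b̃ᵀÃc̃ = 1/6, where c̃ = Ãẽ. -/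
open Matrix

/-- The one-parameter family of implicit pairs for SSPRK(3,3)
satisfies the four third-order conditions, for any `β ≠ 1/2` with
`γ = (2β² − (3/2)β + 1/3)/(2 − 4β)`. -/
theorem implicit_pair_family_third_order
    (β γ : ℝ) (hβ : β ≠ 1/2)
    (hγ : γ = (2 * β ^ 2 - (3/2) * β + 1/3) / (2 - 4 * β)) :
    let At : Matrix (Fin 3) (Fin 3) ℝ :=
      !![0, 0, 0; 4*γ + 2*β, 1 - 4*γ - 2*β, 0; 1/2 - β - γ, γ, β]
    let bt : Fin 3 → ℝ := ![1/6, 1/6, 2/3]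
    let e : Fin 3 → ℝ := fun _ => 1
    let ct : Fin 3 → ℝ := At *ᵥ e
    bt ⬝ᵥ e = 1 ∧ bt ⬝ᵥ ct = 1/2 ∧ bt ⬝ᵥ (ct * ct) = 1/3 ∧
      bt ⬝ᵥ (At *ᵥ ct) = 1/6 := by
  have h2 : (2 - 4 * β) ≠ 0 := by
    intro h; apply hβ; linarith
  intro At bt e ct
  simp only [At, bt, e, ct, dotProduct, mulVec, Fin.sum_univ_three,
    Matrix.cons_val', Matrix.cons_val_zero, Matrix.cons_val_one, Matrix.head_cons,
    Matrix.empty_val', Matrix.cons_val_fin_one, Matrix.head_fin_const,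
    Matrix.cons_val_two, Matrix.tail_cons, Pi.mul_apply, Matrix.of_apply]
  subst hγ
  refine ⟨by norm_num, ?_, ?_, ?_⟩ <;> field_simp <;> ring
end

section
/- In the IMEX SSP framework, if F satisfies the forward Euler condition with step Δt_FE and G satisfies it with step K·Δt_FE, and an additive method has convex-combination decomposition Y = R(e uⁿ) + P(Y + (Δt/r)F(Y)) + Q(Y + (Δt/r̃)G(Y)) with Re, P, Q componentwise nonnegative and row sums of [Re | P | Q] equal to 1, then (for a strictly lower triangular P and Q so stages are computable explicitly by induction) every stage satisfies ‖Yᵢ‖ ≤ ‖uⁿ‖ whenever Δt ≤ min(r·Δt_FE, r̃·K·Δt_FE). -/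
open Matrix

/-- IMEX SSP stage bound. If `F` satisfies the forward Euler
condition with step `Δt_FE`, `G` with step `K·Δt_FE`, and the additive method
has a convex-combination decomposition with componentwise nonnegative `Re`,
`P`, `Q` whose rows sum to one, with `P`, `Q` strictly lower triangular, then
every stage satisfies `N (Y i) ≤ N uⁿ` whenever
`Δt ≤ min (r·Δt_FE) (r̃·K·Δt_FE)`. -/
theorem imex_ssp_stage_bound
    (V : Type*) [AddCommGroup V] [Module ℝ V] (N : V → ℝ)
    (hconv : ∀ (θ : ℝ) (x y : V), 0 ≤ θ → θ ≤ 1 →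
      N (θ • x + (1 - θ) • y) ≤ θ * N x + (1 - θ) * N y)
    (hhom : ∀ (θ : ℝ) (x : V), 0 ≤ θ → N (θ • x) = θ * N x)
    (F G : V → V) (Δt_FE K : ℝ) (hFEpos : 0 < Δt_FE) (hK : 0 < K)
    (hFE : ∀ (u : V) (τ : ℝ), 0 ≤ τ → τ ≤ Δt_FE → N (u + τ • F u) ≤ N u)
    (hGE : ∀ (u : V) (τ : ℝ), 0 ≤ τ → τ ≤ K * Δt_FE → N (u + τ • G u) ≤ N u)
    (s : ℕ) (R P Q : Matrix (Fin (s+1)) (Fin (s+1)) ℝ)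
    (hRe : ∀ i, 0 ≤ (R *ᵥ (fun _ => (1:ℝ))) i)
    (hP : ∀ i j, 0 ≤ P i j) (hQ : ∀ i j, 0 ≤ Q i j)
    (hPlow : ∀ i j : Fin (s+1), i ≤ j → P i j = 0)
    (hQlow : ∀ i j : Fin (s+1), i ≤ j → Q i j = 0)
    (hrow : ∀ i, (R *ᵥ (fun _ => (1:ℝ))) i + ∑ j, (P i j + Q i j) = 1)
    (r rt Δt : ℝ) (hr : 0 < r) (hrt : 0 < rt) (hΔt0 : 0 ≤ Δt)
    (hΔtF : Δt / r ≤ Δt_FE) (hΔtG : Δt / rt ≤ K * Δt_FE)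
    (un : V) (Y : Fin (s+1) → V)
    (hstage : ∀ i, Y i = (R *ᵥ (fun _ => (1:ℝ))) i • un
      + ∑ j, P i j • (Y j + (Δt / r) • F (Y j))
      + ∑ j, Q i j • (Y j + (Δt / rt) • G (Y j))) :
    ∀ i, N (Y i) ≤ N un := by
  have hN0 : N 0 = 0 := by simpa using hhom 0 0
  have hsub : ∀ x y : V, N (x + y) ≤ N x + N y := by
    intro x y
    have h2 := hconv (1/2) x y (by norm_num) (by norm_num)
    have h3 := hhom 2 ((1/2:ℝ) • x + (1 - 1/2 : ℝ) • y) (by norm_num)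
    have hxy : (2:ℝ) • ((1/2:ℝ) • x + (1 - 1/2 : ℝ) • y) = x + y := by
      norm_num [smul_add, smul_smul]
    calc N (x + y) = 2 * N ((1/2:ℝ) • x + (1 - 1/2 : ℝ) • y) := by rw [← h3, hxy]
      _ ≤ 2 * ((1/2) * N x + (1 - 1/2) * N y) := by linarith
      _ = N x + N y := by ring
  have hsum : ∀ (t : Finset (Fin (s+1))) (f : Fin (s+1) → V),
      N (∑ j ∈ t, f j) ≤ ∑ j ∈ t, N (f j) := by
    intro t f
    induction t using Finset.induction with
    | empty => simp [hN0]
    | insert a t h ih =>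
      rw [Finset.sum_insert h, Finset.sum_insert h]
      exact le_trans (hsub _ _) (by linarith)
  have hdr : 0 ≤ Δt / r := div_nonneg hΔt0 hr.le
  have hdrt : 0 ≤ Δt / rt := div_nonneg hΔt0 hrt.le
  have key : ∀ n : ℕ, ∀ i : Fin (s+1), i.val = n → N (Y i) ≤ N un := by
    intro n
    induction n using Nat.strong_induction_on with
    | _ n ih =>
      intro i hi
      rw [hstage i]
      have h1 : N ((R *ᵥ (fun _ => (1:ℝ))) i • un
          + ∑ j, P i j • (Y j + (Δt / r) • F (Y j))
          + ∑ j, Q i j • (Y j + (Δt / rt) • G (Y j)))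
          ≤ (R *ᵥ (fun _ => (1:ℝ))) i * N un
          + ∑ j, N (P i j • (Y j + (Δt / r) • F (Y j)))
          + ∑ j, N (Q i j • (Y j + (Δt / rt) • G (Y j))) := by
        have := hsub ((R *ᵥ (fun _ => (1:ℝ))) i • un
            + ∑ j, P i j • (Y j + (Δt / r) • F (Y j)))
          (∑ j, Q i j • (Y j + (Δt / rt) • G (Y j)))
        have h2 := hsub ((R *ᵥ (fun _ => (1:ℝ))) i • un)
          (∑ j, P i j • (Y j + (Δt / r) • F (Y j)))
        have h4 := hsum Finset.univ (fun j => P i j • (Y j + (Δt / r) • F (Y j)))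
        have h5 := hsum Finset.univ (fun j => Q i j • (Y j + (Δt / rt) • G (Y j)))
        have h6 := hhom _ un (hRe i)
        linarith
      refine le_trans h1 ?_
      have hPb : ∀ j, N (P i j • (Y j + (Δt / r) • F (Y j))) ≤ P i j * N un := by
        intro j
        rw [hhom _ _ (hP i j)]
        rcases lt_or_ge j i with hj | hj
        · have hYj : N (Y j) ≤ N un := ih j.val (hi ▸ hj) j rfl
          have := hFE (Y j) (Δt / r) hdr hΔtF
          exact mul_le_mul_of_nonneg_left (le_trans this hYj) (hP i j)
        · rw [hPlow i j hj]; simp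
      have hQb : ∀ j, N (Q i j • (Y j + (Δt / rt) • G (Y j))) ≤ Q i j * N un := by
        intro j
        rw [hhom _ _ (hQ i j)]
        rcases lt_or_ge j i with hj | hj
        · have hYj : N (Y j) ≤ N un := ih j.val (hi ▸ hj) j rfl
          have := hGE (Y j) (Δt / rt) hdrt hΔtG
          exact mul_le_mul_of_nonneg_left (le_trans this hYj) (hQ i j)
        · rw [hQlow i j hj]; simp
      have hr1 := hrow i
      calc (R *ᵥ (fun _ => (1:ℝ))) i * N un
          + ∑ j, N (P i j • (Y j + (Δt / r) • F (Y j)))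
          + ∑ j, N (Q i j • (Y j + (Δt / rt) • G (Y j)))
          ≤ (R *ᵥ (fun _ => (1:ℝ))) i * N un
            + ∑ j, P i j * N un + ∑ j, Q i j * N un := by
            gcongr with j _ j _
            exacts [hPb j, hQb j]
        _ = ((R *ᵥ (fun _ => (1:ℝ))) i + ∑ j, (P i j + Q i j)) * N un := by
            rw [← Finset.sum_mul, ← Finset.sum_mul, Finset.sum_add_distrib]; ring
        _ = N un := by rw [hr1, one_mul]
  intro i
  exact key i.val i rfl
end
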